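/- Let m be a natural number, v : Finset (Fin m) → ℝ, S : Finset (Fin m), and a, θ : Fin m → ℝ. Assume ∑_{j ∈ S} a(j) = v(S) and that for every X ⊆ S, v(X) ≥ ∑_{j ∈ X} a(j). Let X₀ = {j ∈ S : a(j) > θ(j)}. Then v(X₀) − ∑_{j ∈ X₀} θ(j) ≥ v(S) − ∑_{j ∈ S} θ(j). -/

import Mathlib

/-- **1-value covering of SiSPAs for XOS valuations.** If `a` is an additive supporting
valuation of the XOS valuation `v` at the set `S`, then bidding `a j` on each item `j ∈ S`
against thresholds `θ` (winning exactly the items with `a j > θ j` and paying their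
thresholds) yields utility at least `v S` minus the threshold price of the whole set `S`. -/
theorem xos_value_covering (m : ℕ) (v : Finset (Fin m) → ℝ) (S : Finset (Fin m))
    (a θ : Fin m → ℝ)
    (hsum : ∑ j ∈ S, a j = v S)
    (hdom : ∀ X ⊆ S, v X ≥ ∑ j ∈ X, a j) :
    v (S.filter (fun j => a j > θ j)) - ∑ j ∈ S.filter (fun j => a j > θ j), θ j ≥
      v S - ∑ j ∈ S, θ j := by
  set X₀ := S.filter (fun j => a j > θ j) with hX
  have hsub : X₀ ⊆ S := Finset.filter_subset _ _
  have h1 : v X₀ ≥ ∑ j ∈ X₀, a j := hdom _ hsub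
  have h2 : ∑ j ∈ S, (a j - θ j) ≤ ∑ j ∈ X₀, (a j - θ j) := by
    rw [← Finset.sum_filter_add_sum_filter_not S (fun j => a j > θ j) (fun j => a j - θ j)]
    have : ∑ j ∈ S.filter (fun j => ¬ a j > θ j), (a j - θ j) ≤ 0 := by
      apply Finset.sum_nonpos
      intro j hj
      have := (Finset.mem_filter.mp hj).2
      linarith [not_lt.mp this]
    linarith
  have h3 : ∑ j ∈ X₀, (a j - θ j) = ∑ j ∈ X₀, a j - ∑ j ∈ X₀, θ j :=
    Finset.sum_sub_distrib _ _
  have h4 : ∑ j ∈ S, (a j - θ j) = v S - ∑ j ∈ S, θ j := by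
    rw [Finset.sum_sub_distrib, hsum]
  linarith
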